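/- Given a crown (H, I) in a graph G and any maximum matching M' of G - (H ∪ I), the union M' ∪ M_{H,I} is a maximum matching of G, where M_{H,I} is a matching between H and I saturating H. -/

import Mathlib

/-- A matching in a simple graph `G`, given as a finite set of edges of `G`
that are pairwise vertex-disjoint. -/
def IsMatching {V : Type*} (G : SimpleGraph V) (M : Finset (Sym2 V)) : Prop :=
  (∀ e ∈ M, e ∈ G.edgeSet) ∧
    ∀ e ∈ M, ∀ f ∈ M, e ≠ f → ∀ v, v ∈ e → v ∉ f

/-- A maximum(-cardinality) matching in `G`. -/
def IsMaxMatching {V : Type*} (G : SimpleGraph V) (M : Finset (Sym2 V)) : Prop :=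
  IsMatching G M ∧ ∀ M' : Finset (Sym2 V), IsMatching G M' → M'.card ≤ M.card

/-- The graph obtained from `G` by deleting the vertices in `S`
(the deleted vertices become isolated, which does not affect matchings). -/
def deleteVerts {V : Type*} (G : SimpleGraph V) (S : Set V) : SimpleGraph V where
  Adj a b := G.Adj a b ∧ a ∉ S ∧ b ∉ S
  symm := ⟨fun _ _ ⟨h, ha, hb⟩ => ⟨h.symm, hb, ha⟩⟩
  loopless := ⟨fun a ⟨h, _, _⟩ => G.loopless.irrefl a h⟩

lemma delVert_not {V : Type*} (G : SimpleGraph V) (S : Set V) (e : Sym2 V)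
    (he : e ∈ (deleteVerts G S).edgeSet) : ∀ v ∈ e, v ∉ S := by
  induction e using Sym2.ind with
  | _ x y =>
    rw [SimpleGraph.mem_edgeSet] at he
    obtain ⟨_, hx, hy⟩ := he
    intro v hv
    rw [Sym2.mem_iff] at hv
    rcases hv with rfl | rfl
    exacts [hx, hy]

lemma delVert_edge {V : Type*} (G : SimpleGraph V) (S : Set V) (e : Sym2 V)
    (he : e ∈ (deleteVerts G S).edgeSet) : e ∈ G.edgeSet := by
  induction e using Sym2.ind with
  | _ x y =>
    rw [SimpleGraph.mem_edgeSet] at he ⊢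
    exact he.1

/-- Given a crown `(H, I)` in `G` with saturating matching `MHI`, and any maximum
matching `M'` of `G - (H ∪ I)`, the union `M' ∪ MHI` is a maximum matching of `G`. -/
theorem stmt3 {V : Type*} [Fintype V] [DecidableEq V] (G : SimpleGraph V)
    (H I : Finset V)
    (hind : ∀ a ∈ I, ∀ b ∈ I, ¬ G.Adj a b)
    (hN : ∀ b, b ∈ H ↔ ∃ a ∈ I, G.Adj a b)
    (MHI : Finset (Sym2 V)) (hMHI : IsMatching G MHI)
    (hMbtw : ∀ e ∈ MHI, ∃ a ∈ H, ∃ b ∈ I, e = s(a, b))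
    (hMsat : ∀ a ∈ H, ∃ e ∈ MHI, a ∈ e)
    (M' : Finset (Sym2 V)) (hM' : IsMaxMatching (deleteVerts G (↑H ∪ ↑I)) M') :
    IsMaxMatching G (M' ∪ MHI) := by
  classical
  -- H and I are disjoint
  have hHI : ∀ x ∈ H, x ∉ I := by
    intro x hxH hxI
    obtain ⟨a, haI, hadj⟩ := (hN x).1 hxH
    exact hind a haI x hxI hadj
  -- all vertices of MHI edges are in H ∪ I
  have hMHIvert : ∀ e ∈ MHI, ∀ v ∈ e, v ∈ H ∨ v ∈ I := by
    intro e he v hv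
    obtain ⟨a, haH, b, hbI, rfl⟩ := hMbtw e he
    rw [Sym2.mem_iff] at hv
    rcases hv with rfl | rfl
    exacts [Or.inl haH, Or.inr hbI]
  -- M' edges avoid H ∪ I
  have hM'vert : ∀ e ∈ M', ∀ v ∈ e, v ∉ H ∧ v ∉ I := by
    intro e he v hv
    have := delVert_not G _ e (hM'.1.1 e he) v hv
    simp only [Set.mem_union, Finset.mem_coe] at this
    exact ⟨fun h => this (Or.inl h), fun h => this (Or.inr h)⟩
  -- the unique H-endpoint of an MHI edge
  have hHend : ∀ e ∈ MHI, ∀ a ∈ H, a ∈ e → ∀ a' ∈ H, a' ∈ e → a = a' := by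
    intro e he a haH hae a' haH' hae'
    obtain ⟨c, hcH, b, hbI, rfl⟩ := hMbtw e he
    rw [Sym2.mem_iff] at hae hae'
    rcases hae with rfl | rfl
    · rcases hae' with rfl | rfl
      · rfl
      · exact absurd hbI (hHI _ haH')
    · exact absurd hbI (hHI _ haH)
  -- MHI and M' are disjoint finsets
  have hdisj : Disjoint M' MHI := by
    rw [Finset.disjoint_left]
    intro e heM' heMHI
    obtain ⟨a, haH, b, hbI, rfl⟩ := hMbtw e heMHI
    exact (hM'vert _ heM' a (Sym2.mem_mk_left a b)).1 haH
  -- |MHI| = |H|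
  have hcardMHI : MHI.card = H.card := by
    apply Finset.card_bij (fun e he => (hMbtw e he).choose)
    · intro e he
      exact (hMbtw e he).choose_spec.1
    · intro e1 he1 e2 he2 heq
      by_contra hne
      obtain ⟨h1, b1, hb1, he1'⟩ := (hMbtw e1 he1).choose_spec
      obtain ⟨h2, b2, hb2, he2'⟩ := (hMbtw e2 he2).choose_spec
      have hmem1 : (hMbtw e1 he1).choose ∈ e1 := by
        have := Sym2.mem_mk_left ((hMbtw e1 he1).choose) b1
        rwa [← he1'] at this
      have hmem2 : (hMbtw e2 he2).choose ∈ e2 := by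
        have := Sym2.mem_mk_left ((hMbtw e2 he2).choose) b2
        rwa [← he2'] at this
      have hmem2' : (hMbtw e1 he1).choose ∈ e2 := by rw [heq]; exact hmem2
      exact hMHI.2 e1 he1 e2 he2 hne _ hmem1 hmem2'
    · intro a haH
      obtain ⟨e, he, hae⟩ := hMsat a haH
      refine ⟨e, he, ?_⟩
      obtain ⟨h1, b1, hb1, he1'⟩ := (hMbtw e he).choose_spec
      have hmem : (hMbtw e he).choose ∈ e := by
        have := Sym2.mem_mk_left ((hMbtw e he).choose) b1
        rwa [← he1'] at this
      exact hHend e he _ h1 hmem a haH hae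
  -- the union is a matching
  have hmatch : IsMatching G (M' ∪ MHI) := by
    constructor
    · intro e he
      rcases Finset.mem_union.1 he with h | h
      · exact delVert_edge G _ e (hM'.1.1 e h)
      · exact hMHI.1 e h
    · intro e he f hf hef v hve hvf
      rcases Finset.mem_union.1 he with he' | he' <;>
        rcases Finset.mem_union.1 hf with hf' | hf'
      · exact hM'.1.2 e he' f hf' hef v hve hvf
      · rcases hMHIvert f hf' v hvf with h | h
        · exact (hM'vert e he' v hve).1 h
        · exact (hM'vert e he' v hve).2 h
      · rcases hMHIvert e he' v hve with h | h
        · exact (hM'vert f hf' v hvf).1 h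
        · exact (hM'vert f hf' v hvf).2 h
      · exact hMHI.2 e he' f hf' hef v hve hvf
  refine ⟨hmatch, ?_⟩
  -- maximality
  intro N hNmatch
  set N1 := N.filter (fun e => ∃ a ∈ H, a ∈ e) with hN1def
  set N2 := N.filter (fun e => ¬ ∃ a ∈ H, a ∈ e) with hN2def
  have hsplit : N1.card + N2.card = N.card :=
    Finset.card_filter_add_card_filter_not (fun e => ∃ a ∈ H, a ∈ e)
  -- N1 injects into H
  have hA : N1.card ≤ H.card := by
    rcases N1.eq_empty_or_nonempty with h | ⟨e0, he0⟩
    · simp [h]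
    · obtain ⟨a0, _, _⟩ := (Finset.mem_filter.1 he0).2
      have : Nonempty V := ⟨a0⟩
      apply Finset.card_le_card_of_injOn
        (fun e => if h : ∃ a ∈ H, a ∈ e then h.choose else Classical.arbitrary V)
      · intro e he
        have hp := (Finset.mem_filter.1 he).2
        simp only [dif_pos hp]
        exact hp.choose_spec.1
      · intro e1 he1 e2 he2 heq
        have hp1 := (Finset.mem_filter.1 he1).2
        have hp2 := (Finset.mem_filter.1 he2).2
        simp only [dif_pos hp1, dif_pos hp2] at heq
        by_contra hne
        exact hNmatch.2 e1 (Finset.mem_filter.1 he1).1 e2 (Finset.mem_filter.1 he2).1 hne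
          _ hp1.choose_spec.2 (heq ▸ hp2.choose_spec.2)
  -- N2 is a matching of the deleted graph
  have hB : N2.card ≤ M'.card := by
    apply hM'.2
    constructor
    · intro e he
      have heN := (Finset.mem_filter.1 he).1
      have hnotH := (Finset.mem_filter.1 he).2
      have heG := hNmatch.1 e heN
      induction e using Sym2.ind with
      | _ x y =>
        rw [SimpleGraph.mem_edgeSet] at heG ⊢
        push_neg at hnotH
        have hxH : x ∉ H := fun h => hnotH x h (Sym2.mem_mk_left x y)
        have hyH : y ∉ H := fun h => hnotH y h (Sym2.mem_mk_right x y)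
        have hxI : x ∉ I := fun h =>
          hyH ((hN y).2 ⟨x, h, heG⟩)
        have hyI : y ∉ I := fun h =>
          hxH ((hN x).2 ⟨y, h, heG.symm⟩)
        refine ⟨heG, ?_, ?_⟩ <;> simp [hxH, hyH, hxI, hyI]
    · intro e he f hf hef v hve hvf
      exact hNmatch.2 e (Finset.mem_filter.1 he).1 f (Finset.mem_filter.1 hf).1 hef v hve hvf
  have hcardU : (M' ∪ MHI).card = M'.card + MHI.card :=
    Finset.card_union_of_disjoint hdisj
  calc N.card = N1.card + N2.card := hsplit.symm
    _ ≤ H.card + M'.card := Nat.add_le_add hA hB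
    _ = M'.card + MHI.card := by rw [hcardMHI]; omega
    _ = (M' ∪ MHI).card := hcardU.symm
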